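/- arXiv:1705.01243 — 3 statements merged into one kernel-verified Lean document; each statement's English description precedes it below -/
import Mathlib

section
/- Let φ(λ) = bλ + ∫₀^∞ (1 - e^{-λt}) μ(dt) be a Bernstein function (b ≥ 0, ∫₀^∞ (1 ∧ t) μ(dt) < ∞). Then for each nonnegative integer n there exists a constant N(n) such that λⁿ |φ⁽ⁿ⁾(λ)| ≤ N(n) φ(λ) for all λ > 0, where φ⁽ⁿ⁾ denotes the n-th derivative of φ. -/
open Real Set MeasureTheory Filter Metric

lemma bf_pow_exp_le (n : ℕ) {x : ℝ} (hx : 0 ≤ x) :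
    x ^ n * Real.exp (-x) ≤ (n.factorial : ℝ) := by
  have h := Real.pow_div_factorial_le_exp x hx n
  have h1 : (0:ℝ) < (n.factorial : ℝ) := by positivity
  have h2 := Real.exp_pos x
  rw [Real.exp_neg]
  rw [div_le_iff₀ h1] at h
  calc x ^ n * (Real.exp x)⁻¹ ≤ (Real.exp x * (n.factorial : ℝ)) * (Real.exp x)⁻¹ := by
        apply mul_le_mul_of_nonneg_right h (by positivity)
    _ = (n.factorial : ℝ) := by field_simp

lemma bf_key (n : ℕ) (hn : 1 ≤ n) {x : ℝ} (hx : 0 < x) :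
    x ^ n * Real.exp (-x) ≤ 2 * (n.factorial : ℝ) * (1 - Real.exp (-x)) := by
  have hfac : (1:ℝ) ≤ (n.factorial : ℝ) := by
    exact_mod_cast Nat.one_le_iff_ne_zero.mpr (Nat.factorial_ne_zero n)
  have hep := Real.exp_pos (-x)
  rcases le_total x 1 with h1 | h1
  · have hxn : x ^ n ≤ x := by
      calc x ^ n ≤ x ^ 1 := pow_le_pow_of_le_one hx.le h1 hn
        _ = x := pow_one x
    have h2 : x * Real.exp (-x) ≤ 1 - Real.exp (-x) := by
      have h3 := Real.add_one_le_exp x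
      have h4 : Real.exp (-x) * Real.exp x = 1 := by
        rw [← Real.exp_add]; simp
      nlinarith
    nlinarith [mul_le_mul_of_nonneg_right hxn hep.le]
  · have h2 : x ^ n * Real.exp (-x) ≤ (n.factorial : ℝ) := bf_pow_exp_le n hx.le
    have h3 : Real.exp (-x) ≤ Real.exp (-1) := by
      apply Real.exp_le_exp.mpr; linarith
    have h4 : Real.exp (-1 : ℝ) ≤ 1/2 := by
      rw [Real.exp_neg]
      have : (2:ℝ) ≤ Real.exp 1 := by
        have := Real.add_one_le_exp (1:ℝ); linarith
      rw [inv_le_comm₀ (by positivity) (by norm_num)]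
      linarith
    nlinarith

lemma bf_int_min (μ : Measure ℝ)
    (hμ : ∫⁻ t in Set.Ioi (0 : ℝ), ENNReal.ofReal (min 1 t) ∂μ < ⊤) :
    Integrable (fun t => min 1 t) (μ.restrict (Set.Ioi 0)) := by
  refine ⟨(continuous_const.min continuous_id).aestronglyMeasurable, ?_⟩
  rw [hasFiniteIntegral_iff_norm]
  calc ∫⁻ t, ENNReal.ofReal ‖min 1 t‖ ∂(μ.restrict (Set.Ioi 0))
      = ∫⁻ t, ENNReal.ofReal (min 1 t) ∂(μ.restrict (Set.Ioi 0)) := by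
        apply lintegral_congr_ae
        filter_upwards [ae_restrict_mem measurableSet_Ioi] with t ht
        rw [Real.norm_eq_abs, abs_of_nonneg]
        exact le_min zero_le_one (le_of_lt ht)
    _ < ⊤ := hμ

lemma bf_int_dom (μ : Measure ℝ)
    (hμ : ∫⁻ t in Set.Ioi (0 : ℝ), ENNReal.ofReal (min 1 t) ∂μ < ⊤)
    {f : ℝ → ℝ} (hf : Continuous f) (C : ℝ)
    (hC : ∀ t ∈ Set.Ioi (0:ℝ), ‖f t‖ ≤ C * min 1 t) :
    Integrable f (μ.restrict (Set.Ioi 0)) := by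
  refine Integrable.mono' ((bf_int_min μ hμ).const_mul C) hf.aestronglyMeasurable ?_
  exact (ae_restrict_iff' measurableSet_Ioi).2 (ae_of_all _ hC)

lemma bf_bound_pow (n : ℕ) (hn : 1 ≤ n) {c : ℝ} (hc : 0 < c) {t : ℝ} (ht : 0 < t) :
    ‖t ^ n * Real.exp (-(c * t))‖ ≤ max 1 ((n.factorial : ℝ) / c ^ n) * min 1 t := by
  rw [Real.norm_eq_abs, abs_of_nonneg (by positivity)]
  rcases le_total t 1 with h1 | h1
  · rw [min_eq_right h1]
    have hxn : t ^ n ≤ t := by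
      calc t ^ n ≤ t ^ 1 := pow_le_pow_of_le_one ht.le h1 hn
        _ = t := pow_one t
    have he : Real.exp (-(c * t)) ≤ 1 := Real.exp_le_one_iff.mpr (by nlinarith)
    calc t ^ n * Real.exp (-(c * t)) ≤ t * 1 := by
          apply mul_le_mul hxn he (Real.exp_pos _).le ht.le
      _ = 1 * t := by ring
      _ ≤ max 1 ((n.factorial : ℝ) / c ^ n) * t := by
          apply mul_le_mul_of_nonneg_right (le_max_left _ _) ht.le
  · rw [min_eq_left h1]
    have key : (c * t) ^ n * Real.exp (-(c * t)) ≤ (n.factorial : ℝ) :=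
      bf_pow_exp_le n (by positivity)
    have hcn : (0:ℝ) < c ^ n := by positivity
    have : t ^ n * Real.exp (-(c * t)) ≤ (n.factorial : ℝ) / c ^ n := by
      rw [le_div_iff₀ hcn]
      calc t ^ n * Real.exp (-(c * t)) * c ^ n
          = (c * t) ^ n * Real.exp (-(c * t)) := by rw [mul_pow]; ring
        _ ≤ (n.factorial : ℝ) := key
    calc t ^ n * Real.exp (-(c * t)) ≤ (n.factorial : ℝ) / c ^ n := this
      _ ≤ max 1 ((n.factorial : ℝ) / c ^ n) := le_max_right _ _
      _ = max 1 ((n.factorial : ℝ) / c ^ n) * 1 := (mul_one _).symm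

lemma bf_bound_onesub {l t : ℝ} (hl : 0 < l) (ht : 0 < t) :
    ‖1 - Real.exp (-(l * t))‖ ≤ max 1 l * min 1 t := by
  have h0 : 0 ≤ 1 - Real.exp (-(l * t)) := by
    have : Real.exp (-(l * t)) ≤ 1 := Real.exp_le_one_iff.mpr (by nlinarith)
    linarith
  have hle : 1 - Real.exp (-(l * t)) ≤ l * t := by
    have := Real.add_one_le_exp (-(l * t)); linarith
  rw [Real.norm_eq_abs, abs_of_nonneg h0]
  rcases le_total t 1 with h1 | h1
  · rw [min_eq_right h1]
    calc 1 - Real.exp (-(l * t)) ≤ l * t := hle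
      _ ≤ max 1 l * t := mul_le_mul_of_nonneg_right (le_max_right _ _) ht.le
  · rw [min_eq_left h1]
    have : 1 - Real.exp (-(l * t)) ≤ 1 := by
      have := (Real.exp_pos (-(l * t))).le; linarith
    calc 1 - Real.exp (-(l * t)) ≤ 1 := this
      _ ≤ max 1 l * 1 := by rw [mul_one]; exact le_max_left _ _

lemma bf_cont_pow (n : ℕ) (c : ℝ) :
    Continuous (fun t : ℝ => t ^ n * Real.exp (-(c * t))) := by
  continuity

lemma bf_int_pow (μ : Measure ℝ)
    (hμ : ∫⁻ t in Set.Ioi (0 : ℝ), ENNReal.ofReal (min 1 t) ∂μ < ⊤)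
    (n : ℕ) (hn : 1 ≤ n) {c : ℝ} (hc : 0 < c) :
    Integrable (fun t => t ^ n * Real.exp (-(c * t))) (μ.restrict (Set.Ioi 0)) :=
  bf_int_dom μ hμ (bf_cont_pow n c) _ (fun _ ht => bf_bound_pow n hn hc ht)

lemma bf_int_onesub (μ : Measure ℝ)
    (hμ : ∫⁻ t in Set.Ioi (0 : ℝ), ENNReal.ofReal (min 1 t) ∂μ < ⊤)
    {l : ℝ} (hl : 0 < l) :
    Integrable (fun t => 1 - Real.exp (-(l * t))) (μ.restrict (Set.Ioi 0)) :=
  bf_int_dom μ hμ (by continuity) _ (fun _ ht => bf_bound_onesub hl ht)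

lemma bf_inner_deriv (n : ℕ) (t : ℝ) (x : ℝ) :
    HasDerivAt (fun x : ℝ => t ^ n * Real.exp (-(x * t)))
      (-(t ^ (n+1) * Real.exp (-(x * t)))) x := by
  have h : HasDerivAt (fun x : ℝ => -(x * t)) (-t) x := (hasDerivAt_mul_const t).neg
  have h2 := (h.exp).const_mul (t ^ n)
  rw [show -(t ^ (n+1) * Real.exp (-(x * t))) = t ^ n * (Real.exp (-(x * t)) * -t) by ring]
  exact h2

lemma bf_exp_mono {x l t : ℝ} (hx : l ≤ x) (ht : 0 ≤ t) :
    Real.exp (-(x * t)) ≤ Real.exp (-(l * t)) := by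
  apply Real.exp_le_exp.mpr; nlinarith

lemma bf_hasDerivAt_I (μ : Measure ℝ)
    (hμ : ∫⁻ t in Set.Ioi (0 : ℝ), ENNReal.ofReal (min 1 t) ∂μ < ⊤)
    (n : ℕ) (hn : 1 ≤ n) {l : ℝ} (hl : 0 < l) :
    HasDerivAt (fun x => ∫ t in Set.Ioi (0:ℝ), t ^ n * Real.exp (-(x * t)) ∂μ)
      (-(∫ t in Set.Ioi (0:ℝ), t ^ (n+1) * Real.exp (-(l * t)) ∂μ)) l := by
  have hl2 : 0 < l / 2 := by linarith
  have key := hasDerivAt_integral_of_dominated_loc_of_deriv_le (μ := μ.restrict (Set.Ioi 0))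
    (F := fun x t => t ^ n * Real.exp (-(x * t)))
    (F' := fun x t => -(t ^ (n+1) * Real.exp (-(x * t))))
    (x₀ := l) (bound := fun t => t ^ (n+1) * Real.exp (-((l/2) * t)))
    (ball_mem_nhds l hl2)
    (Eventually.of_forall fun x => (bf_cont_pow n x).aestronglyMeasurable)
    (bf_int_pow μ hμ n hn hl)
    (((bf_cont_pow (n+1) l).neg).aestronglyMeasurable)
    ?_ (bf_int_pow μ hμ (n+1) (by omega) hl2)
    (Eventually.of_forall fun t => fun x _ => bf_inner_deriv n t x)
  · rcases key with ⟨_, hd⟩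
    rw [integral_neg] at hd
    exact hd
  · filter_upwards [ae_restrict_mem measurableSet_Ioi] with t ht x hx
    have ht' : (0:ℝ) < t := ht
    have hxl : l / 2 ≤ x := by
      have := abs_lt.mp (mem_ball_iff_norm.mp hx); linarith [this.1]
    rw [norm_neg, Real.norm_eq_abs, abs_of_nonneg (by positivity)]
    exact mul_le_mul_of_nonneg_left (bf_exp_mono hxl ht'.le) (by positivity)

lemma bf_hasDerivAt_J (μ : Measure ℝ)
    (hμ : ∫⁻ t in Set.Ioi (0 : ℝ), ENNReal.ofReal (min 1 t) ∂μ < ⊤)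
    {l : ℝ} (hl : 0 < l) :
    HasDerivAt (fun x => ∫ t in Set.Ioi (0:ℝ), (1 - Real.exp (-(x * t))) ∂μ)
      (∫ t in Set.Ioi (0:ℝ), t ^ 1 * Real.exp (-(l * t)) ∂μ) l := by
  have hl2 : 0 < l / 2 := by linarith
  have key := hasDerivAt_integral_of_dominated_loc_of_deriv_le (μ := μ.restrict (Set.Ioi 0))
    (F := fun x t => 1 - Real.exp (-(x * t)))
    (F' := fun x t => t ^ 1 * Real.exp (-(x * t)))
    (x₀ := l) (bound := fun t => t ^ 1 * Real.exp (-((l/2) * t)))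
    (ball_mem_nhds l hl2)
    (Eventually.of_forall fun x => (Continuous.aestronglyMeasurable (by continuity)))
    (bf_int_onesub μ hμ hl)
    ((bf_cont_pow 1 l).aestronglyMeasurable)
    ?_ (bf_int_pow μ hμ 1 le_rfl hl2)
    ?_
  · exact key.2
  · filter_upwards [ae_restrict_mem measurableSet_Ioi] with t ht x hx
    have ht' : (0:ℝ) < t := ht
    have hxl : l / 2 ≤ x := by
      have := abs_lt.mp (mem_ball_iff_norm.mp hx); linarith [this.1]
    rw [Real.norm_eq_abs, abs_of_nonneg (by positivity)]
    exact mul_le_mul_of_nonneg_left (bf_exp_mono hxl ht'.le) (by positivity)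
  · apply Eventually.of_forall
    intro t x _
    have h : HasDerivAt (fun x : ℝ => -(x * t)) (-t) x := (hasDerivAt_mul_const t).neg
    have h2 := (h.exp).const_sub 1
    rw [show t ^ 1 * Real.exp (-(x * t)) = -(Real.exp (-(x * t)) * -t) by ring]
    exact h2

lemma bf_iter_formula (b : ℝ) (μ : Measure ℝ)
    (hμ : ∫⁻ t in Set.Ioi (0 : ℝ), ENNReal.ofReal (min 1 t) ∂μ < ⊤)
    (φ : ℝ → ℝ)
    (hφ : ∀ l : ℝ, 0 < l →
      φ l = b * l + ∫ t in Set.Ioi (0 : ℝ), (1 - Real.exp (-(l * t))) ∂μ)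
    (n : ℕ) (hn : 1 ≤ n) :
    ∀ l : ℝ, 0 < l → iteratedDeriv n φ l =
      (if n = 1 then b else 0) +
        (-1:ℝ)^(n+1) * ∫ t in Set.Ioi (0:ℝ), t ^ n * Real.exp (-(l * t)) ∂μ := by
  induction n, hn using Nat.le_induction with
  | base =>
    intro l hl
    rw [iteratedDeriv_one]
    have heq : φ =ᶠ[nhds l]
        fun x => b * x + ∫ t in Set.Ioi (0:ℝ), (1 - Real.exp (-(x * t))) ∂μ := by
      filter_upwards [isOpen_Ioi.mem_nhds (show l ∈ Set.Ioi (0:ℝ) from hl)] with x hx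
      exact hφ x hx
    rw [heq.deriv_eq]
    have hd : HasDerivAt
        (fun x => b * x + ∫ t in Set.Ioi (0:ℝ), (1 - Real.exp (-(x * t))) ∂μ)
        (b + ∫ t in Set.Ioi (0:ℝ), t ^ 1 * Real.exp (-(l * t)) ∂μ) l := by
      have h1 : HasDerivAt (fun x : ℝ => b * x) b l := by
        simpa using (hasDerivAt_id l).const_mul b
      exact h1.add (bf_hasDerivAt_J μ hμ hl)
    rw [hd.deriv]
    norm_num
  | succ n hn ih =>
    intro l hl
    rw [iteratedDeriv_succ]
    have heq : iteratedDeriv n φ =ᶠ[nhds l]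
        fun x => (if n = 1 then b else 0) +
          (-1:ℝ)^(n+1) * ∫ t in Set.Ioi (0:ℝ), t ^ n * Real.exp (-(x * t)) ∂μ := by
      filter_upwards [isOpen_Ioi.mem_nhds (show l ∈ Set.Ioi (0:ℝ) from hl)] with x hx
      exact ih x hx
    rw [heq.deriv_eq]
    have hd : HasDerivAt
        (fun x => (if n = 1 then b else 0) +
          (-1:ℝ)^(n+1) * ∫ t in Set.Ioi (0:ℝ), t ^ n * Real.exp (-(x * t)) ∂μ)
        ((-1:ℝ)^(n+1) * -(∫ t in Set.Ioi (0:ℝ), t ^ (n+1) * Real.exp (-(l * t)) ∂μ)) l :=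
      ((bf_hasDerivAt_I μ hμ n hn hl).const_mul ((-1:ℝ)^(n+1))).const_add _
    rw [hd.deriv]
    have hne : ¬ (n + 1 = 1) := by omega
    rw [if_neg hne]
    ring

/-- For a Bernstein function `φ(λ) = bλ + ∫₀^∞ (1 - e^{-λt}) μ(dt)`, for every
`n` there is a constant `N(n)` with `λⁿ |φ⁽ⁿ⁾(λ)| ≤ N(n) φ(λ)` for all `λ > 0`. -/
theorem stmt_3 (b : ℝ) (hb : 0 ≤ b) (μ : Measure ℝ)
    (hμ : ∫⁻ t in Set.Ioi (0 : ℝ), ENNReal.ofReal (min 1 t) ∂μ < ⊤)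
    (φ : ℝ → ℝ)
    (hφ : ∀ l : ℝ, 0 < l →
      φ l = b * l + ∫ t in Set.Ioi (0 : ℝ), (1 - Real.exp (-(l * t))) ∂μ)
    (n : ℕ) :
    ∃ N : ℝ, 0 < N ∧ ∀ l : ℝ, 0 < l →
      l ^ n * |iteratedDeriv n φ l| ≤ N * φ l := by
  have hfac : (1:ℝ) ≤ (n.factorial : ℝ) := by
    exact_mod_cast Nat.one_le_iff_ne_zero.mpr (Nat.factorial_ne_zero n)
  refine ⟨1 + 2 * (n.factorial : ℝ), by linarith, ?_⟩
  intro l hl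
  -- nonnegativity of J and φ
  have hJ : ∀ x : ℝ, 0 < x →
      0 ≤ ∫ t in Set.Ioi (0:ℝ), (1 - Real.exp (-(x * t))) ∂μ := by
    intro x hx
    apply setIntegral_nonneg measurableSet_Ioi
    intro t ht
    have : Real.exp (-(x * t)) ≤ 1 := Real.exp_le_one_iff.mpr (by nlinarith [mem_Ioi.mp ht])
    linarith
  have hφnn : 0 ≤ φ l := by
    rw [hφ l hl]
    have := hJ l hl
    nlinarith
  rcases Nat.eq_zero_or_pos n with hn0 | hn
  · subst hn0
    simp only [pow_zero, iteratedDeriv_zero, one_mul]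
    rw [abs_of_nonneg hφnn]
    nlinarith
  -- main case n ≥ 1
  have hform := bf_iter_formula b μ hμ φ hφ n hn l hl
  set I : ℝ := ∫ t in Set.Ioi (0:ℝ), t ^ n * Real.exp (-(l * t)) ∂μ with hI
  have hInn : 0 ≤ I := by
    apply setIntegral_nonneg measurableSet_Ioi
    intro t ht
    have ht' : (0:ℝ) < t := ht
    positivity
  have habs : |iteratedDeriv n φ l| ≤ (if n = 1 then b else 0) + I := by
    rw [hform]
    calc |(if n = 1 then b else 0) + (-1:ℝ)^(n+1) * I|
        ≤ |if n = 1 then b else 0| + |(-1:ℝ)^(n+1) * I| := abs_add_le _ _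
      _ = (if n = 1 then b else 0) + I := by
          rw [abs_mul, abs_pow, abs_neg, abs_one, one_pow, one_mul,
            abs_of_nonneg hInn, abs_of_nonneg (by split <;> simp [hb])]
  have hlnn : (0:ℝ) ≤ l ^ n := by positivity
  have step1 : l ^ n * |iteratedDeriv n φ l| ≤
      l ^ n * (if n = 1 then b else 0) + l ^ n * I := by
    calc l ^ n * |iteratedDeriv n φ l| ≤ l ^ n * ((if n = 1 then b else 0) + I) :=
          mul_le_mul_of_nonneg_left habs hlnn
      _ = l ^ n * (if n = 1 then b else 0) + l ^ n * I := by ring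
  -- bound the b-term
  have hbterm : l ^ n * (if n = 1 then b else 0) ≤ φ l := by
    rw [hφ l hl]
    have := hJ l hl
    split
    · next h => subst h; rw [pow_one]; nlinarith
    · rw [mul_zero]; nlinarith
  -- bound the integral term
  have hIterm : l ^ n * I ≤ 2 * (n.factorial : ℝ) * φ l := by
    have hstep : l ^ n * I =
        ∫ t in Set.Ioi (0:ℝ), (l * t) ^ n * Real.exp (-(l * t)) ∂μ := by
      rw [hI, ← integral_const_mul]
      apply integral_congr_ae
      apply ae_of_all
      intro t
      show l ^ n * (t ^ n * Real.exp (-(l * t))) = (l * t) ^ n * Real.exp (-(l * t))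
      rw [mul_pow]; ring
    have hmono : (∫ t in Set.Ioi (0:ℝ), (l * t) ^ n * Real.exp (-(l * t)) ∂μ) ≤
        ∫ t in Set.Ioi (0:ℝ), 2 * (n.factorial : ℝ) * (1 - Real.exp (-(l * t))) ∂μ := by
      apply integral_mono_ae
      · have := (bf_int_pow μ hμ n hn hl).const_mul (l ^ n)
        apply this.congr
        apply ae_of_all
        intro t
        show l ^ n * (t ^ n * Real.exp (-(l * t))) = (l * t) ^ n * Real.exp (-(l * t))
        rw [mul_pow]; ring
      · exact (bf_int_onesub μ hμ hl).const_mul _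
      · filter_upwards [ae_restrict_mem measurableSet_Ioi] with t ht
        have ht' : (0:ℝ) < t := ht
        exact bf_key n hn (by positivity)
    have hJle : (∫ t in Set.Ioi (0:ℝ),
        2 * (n.factorial : ℝ) * (1 - Real.exp (-(l * t))) ∂μ) ≤
        2 * (n.factorial : ℝ) * φ l := by
      rw [integral_const_mul, hφ l hl]
      have := hJ l hl
      nlinarith [mul_nonneg (mul_nonneg (by linarith : (0:ℝ) ≤ 2 * (n.factorial : ℝ)) hb) hl.le]
    calc l ^ n * I = _ := hstep
      _ ≤ _ := hmono
      _ ≤ 2 * (n.factorial : ℝ) * φ l := hJle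
  calc l ^ n * |iteratedDeriv n φ l| ≤
      l ^ n * (if n = 1 then b else 0) + l ^ n * I := step1
    _ ≤ φ l + 2 * (n.factorial : ℝ) * φ l := add_le_add hbterm hIterm
    _ = (1 + 2 * (n.factorial : ℝ)) * φ l := by ring
end

section
/- Suppose Ψ(t,ξ) is a complex-valued symbol with Re Ψ(t,ξ) ≤ -δ₆ ψ(|ξ|²) for all t > 0, ξ ∈ ℝ^d, where ψ satisfies ψ > 0, nondecreasing, and the weak scaling bounds, and let a_t = (ψ⁻¹(t⁻¹))^{1/2}. Then there exists N > 0 depending only on δ₄, δ₅, δ₆, N₇, N₈ such that t·Re Ψ(r, a_t ξ) ≤ -N|ξ|^{δ̃₁} for all t, r > 0 and ξ ∈ ℝ^d, where δ̃₁(ξ) = 2δ₄ for |ξ| ≥ 1 and 2δ₅ for |ξ| < 1. -/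
open Real Set

/-- If `Re Ψ(t,ξ) ≤ -δ₆ ψ(|ξ|²)` with `ψ` satisfying the weak scaling bounds,
and `a_t = (ψ⁻¹(1/t))^{1/2}`, then `t Re Ψ(r, a_t ξ) ≤ -N |ξ|^{δ̃₁}`. -/
theorem stmt_8 {d : ℕ} (ψ : ℝ → ℝ) (δ₄ δ₅ δ₆ N₇ N₈ : ℝ)
    (hδ₄ : 0 < δ₄) (hδ : δ₄ ≤ δ₅) (hδ₆ : 0 < δ₆) (hN₇ : 0 < N₇) (hN₈ : 0 < N₈)
    (hpos : ∀ x : ℝ, 0 < x → 0 < ψ x)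
    (hmono : ∀ x y : ℝ, 0 < x → x ≤ y → ψ x ≤ ψ y)
    (hscale : ∀ l₁ l₂ : ℝ, 0 < l₁ → l₁ ≤ l₂ →
      N₇ * (l₂ / l₁) ^ δ₄ ≤ ψ l₂ / ψ l₁ ∧ ψ l₂ / ψ l₁ ≤ N₈ * (l₂ / l₁) ^ δ₅)
    (Ψ : ℝ → EuclideanSpace ℝ (Fin d) → ℂ)
    (hΨ : ∀ (t : ℝ) (ξ : EuclideanSpace ℝ (Fin d)), 0 < t → ξ ≠ 0 →
      (Ψ t ξ).re ≤ -(δ₆ * ψ (‖ξ‖ ^ 2))) :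
    ∃ N : ℝ, 0 < N ∧ ∀ (t r : ℝ) (ξ : EuclideanSpace ℝ (Fin d)),
      0 < t → 0 < r → ξ ≠ 0 →
      t * (Ψ r ((Real.sqrt (sInf {s : ℝ | 0 < s ∧ t⁻¹ ≤ ψ s})) • ξ)).re ≤
        -(N * ‖ξ‖ ^ (if 1 ≤ ‖ξ‖ then 2 * δ₄ else 2 * δ₅)) := by
  classical
  have h2pos : (0:ℝ) < 2 := by norm_num
  set C : ℝ := min (N₇ * (2:ℝ) ^ (-δ₄)) ((N₈ * (2:ℝ) ^ (δ₄ + δ₅))⁻¹) with hCdef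
  have hC : 0 < C := by
    apply lt_min
    · exact mul_pos hN₇ (Real.rpow_pos_of_pos h2pos _)
    · exact inv_pos.mpr (mul_pos hN₈ (Real.rpow_pos_of_pos h2pos _))
  clear_value C
  refine ⟨δ₆ * C, mul_pos hδ₆ hC, ?_⟩
  intro t r ξ ht hr hξ
  have hψ1 : 0 < ψ 1 := hpos 1 one_pos
  set S : Set ℝ := {s : ℝ | 0 < s ∧ t⁻¹ ≤ ψ s} with hSdef
  -- S is nonempty
  have hSne : S.Nonempty := by
    refine ⟨max 1 ((t⁻¹ / (N₇ * ψ 1)) ^ δ₄⁻¹), ?_, ?_⟩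
    · exact lt_of_lt_of_le one_pos (le_max_left _ _)
    · set L := max 1 ((t⁻¹ / (N₇ * ψ 1)) ^ δ₄⁻¹) with hL
      have hL1 : (1:ℝ) ≤ L := le_max_left _ _
      have hLpow : t⁻¹ / (N₇ * ψ 1) ≤ L ^ δ₄ := by
        calc t⁻¹ / (N₇ * ψ 1) = ((t⁻¹ / (N₇ * ψ 1)) ^ δ₄⁻¹) ^ δ₄ :=
              (Real.rpow_inv_rpow (by positivity) hδ₄.ne').symm
          _ ≤ L ^ δ₄ := Real.rpow_le_rpow (by positivity) (le_max_right _ _) hδ₄.le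
      have h := (hscale 1 L one_pos hL1).1
      have h' : N₇ * L ^ δ₄ * ψ 1 ≤ ψ L := by
        have := (le_div_iff₀ hψ1).mp h
        simpa using this
      calc t⁻¹ = t⁻¹ / (N₇ * ψ 1) * (N₇ * ψ 1) := by field_simp
        _ ≤ L ^ δ₄ * (N₇ * ψ 1) := by
            apply mul_le_mul_of_nonneg_right hLpow (by positivity)
        _ = N₇ * L ^ δ₄ * ψ 1 := by ring
        _ ≤ ψ L := h'
  have hSbdd : BddBelow S := ⟨0, fun s hs => hs.1.le⟩
  set m : ℝ := sInf S with hm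
  -- small s have small ψ
  have hsmall : ∀ s : ℝ, 0 < s → s ≤ 1 → ψ s ≤ ψ 1 * s ^ δ₄ / N₇ := by
    intro s hs hs1
    have h := (hscale s 1 hs hs1).1
    have h' : N₇ * (1 / s) ^ δ₄ * ψ s ≤ ψ 1 := (le_div_iff₀ (hpos s hs)).mp h
    have hsp : (0:ℝ) < s ^ δ₄ := Real.rpow_pos_of_pos hs _
    have hrw : (1 / s : ℝ) ^ δ₄ = (s ^ δ₄)⁻¹ := by
      rw [one_div, Real.inv_rpow hs.le]
    rw [hrw] at h'
    have h'' : ψ s * N₇ ≤ ψ 1 * s ^ δ₄ := by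
      calc ψ s * N₇ = N₇ * (s ^ δ₄)⁻¹ * ψ s * s ^ δ₄ := by field_simp
        _ ≤ ψ 1 * s ^ δ₄ := mul_le_mul_of_nonneg_right h' hsp.le
    rw [le_div_iff₀ hN₇]
    linarith
  -- m is positive
  have hmpos : 0 < m := by
    set ε : ℝ := min 1 ((t⁻¹ * N₇ / (2 * ψ 1)) ^ δ₄⁻¹) with hε
    have hεpos : 0 < ε := lt_min one_pos (Real.rpow_pos_of_pos (by positivity) _)
    have hlb : ∀ s ∈ S, ε ≤ s := by
      intro s hs
      by_contra hcon
      push_neg at hcon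
      have hs1 : s ≤ 1 := hcon.le.trans (min_le_left _ _)
      have h1 := hsmall s hs.1 hs1
      have hspow : s ^ δ₄ < t⁻¹ * N₇ / (2 * ψ 1) := by
        calc s ^ δ₄ < ε ^ δ₄ := Real.rpow_lt_rpow hs.1.le hcon hδ₄
          _ ≤ ((t⁻¹ * N₇ / (2 * ψ 1)) ^ δ₄⁻¹) ^ δ₄ :=
              Real.rpow_le_rpow hεpos.le (min_le_right _ _) hδ₄.le
          _ = t⁻¹ * N₇ / (2 * ψ 1) := Real.rpow_inv_rpow (by positivity) hδ₄.ne'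
      have : ψ s < t⁻¹ := by
        calc ψ s ≤ ψ 1 * s ^ δ₄ / N₇ := h1
          _ < ψ 1 * (t⁻¹ * N₇ / (2 * ψ 1)) / N₇ := by
              gcongr
          _ = t⁻¹ / 2 := by field_simp
          _ < t⁻¹ := by
              have : 0 < t⁻¹ := inv_pos.mpr ht
              linarith
      exact absurd hs.2 (not_le.mpr this)
    exact lt_of_lt_of_le hεpos (le_csInf hSne hlb)
  -- everything above m is in ψ-range
  have habove : ∀ s : ℝ, m < s → t⁻¹ ≤ ψ s := by
    intro s hms
    obtain ⟨u, huS, hus⟩ := exists_lt_of_csInf_lt hSne hms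
    exact huS.2.trans (hmono u s huS.1 hus.le)
  have h2m : t⁻¹ ≤ ψ (2 * m) := habove _ (by linarith)
  have hm0 : m ≠ 0 := hmpos.ne'
  clear_value m
  have hξn : 0 < ‖ξ‖ := norm_pos_iff.mpr hξ
  set l : ℝ := ‖ξ‖ ^ 2 with hldef
  have hlpos : 0 < l := by positivity
  set A : ℝ := (2:ℝ) ^ δ₄ with hA
  set B : ℝ := (2:ℝ) ^ δ₅ with hB
  have hApos : 0 < A := Real.rpow_pos_of_pos h2pos _
  have hBpos : 0 < B := Real.rpow_pos_of_pos h2pos _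
  have hA1 : 1 ≤ A := Real.one_le_rpow (by norm_num) hδ₄.le
  have hAB : (2:ℝ) ^ (δ₄ + δ₅) = A * B := Real.rpow_add h2pos _ _
  clear_value A B
  have hCle : C * (N₈ * (A * B)) ≤ 1 := by
    have h : C ≤ (N₈ * (A * B))⁻¹ := by
      rw [hCdef, ← hAB]; exact min_le_right _ _
    calc C * (N₈ * (A * B)) ≤ (N₈ * (A * B))⁻¹ * (N₈ * (A * B)) :=
          mul_le_mul_of_nonneg_right h (by positivity)
      _ = 1 := inv_mul_cancel₀ (by positivity)
  set u : ℝ := t⁻¹ with hu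
  have hupos : 0 < u := inv_pos.mpr ht
  have h2mu : u ≤ ψ (2 * m) := h2m
  clear_value u
  set v : ℝ := ψ (m * l) with hv
  have hvpos : 0 < v := hpos _ (mul_pos hmpos hlpos)
  clear_value v
  set P : ℝ := l ^ δ₄ with hP
  set Q : ℝ := l ^ δ₅ with hQ
  have hPpos : 0 < P := Real.rpow_pos_of_pos hlpos _
  have hQpos : 0 < Q := Real.rpow_pos_of_pos hlpos _
  clear_value P Q
  clear_value l
  -- the key lower bound on ψ (m * l)
  have key : C * u * l ^ (if 1 ≤ ‖ξ‖ then δ₄ else δ₅) ≤ v := by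
    rcases le_or_gt 2 l with hl2 | hl2
    · -- large frequency case
      have hone : 1 ≤ ‖ξ‖ := by
        by_contra hcon
        have : l < 1 := by
          rw [hldef]
          push_neg at hcon
          exact pow_lt_one₀ (norm_nonneg _) hcon (by norm_num)
        linarith
      rw [if_pos hone, ← hP]
      have hsc := (hscale (2 * m) (m * l) (by linarith) (by nlinarith)).1
      have h1 : N₇ * ((m * l) / (2 * m)) ^ δ₄ * ψ (2 * m) ≤ ψ (m * l) :=
        (le_div_iff₀ (hpos _ (by linarith))).mp hsc
      rw [← hv] at h1
      have hratio : (m * l) / (2 * m) = l / 2 := by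
        field_simp
      rw [hratio] at h1
      have hdiv : (l / 2 : ℝ) ^ δ₄ = P * A⁻¹ := by
        rw [Real.div_rpow hlpos.le (by norm_num), div_eq_mul_inv, ← hP, ← hA]
      rw [hdiv] at h1
      have hCle₁ : C ≤ N₇ * A⁻¹ := by
        rw [hCdef, hA, ← Real.rpow_neg (by norm_num : (0:ℝ) ≤ 2)]
        exact min_le_left _ _
      calc C * u * P ≤ (N₇ * A⁻¹) * u * P :=
            mul_le_mul_of_nonneg_right (mul_le_mul_of_nonneg_right hCle₁ hupos.le) hPpos.le
        _ ≤ (N₇ * A⁻¹) * ψ (2 * m) * P :=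
            mul_le_mul_of_nonneg_right
              (mul_le_mul_of_nonneg_left h2mu (mul_nonneg hN₇.le (inv_nonneg.mpr hApos.le)))
              hPpos.le
        _ = N₇ * (P * A⁻¹) * ψ (2 * m) := by ring
        _ ≤ v := h1
    · -- small frequency case
      have hsc := (hscale (m * l) (2 * m) (mul_pos hmpos hlpos) (by nlinarith)).2
      have h2 : ψ (2 * m) ≤ N₈ * ((2 * m) / (m * l)) ^ δ₅ * ψ (m * l) :=
        (div_le_iff₀ (hpos _ (mul_pos hmpos hlpos))).mp hsc
      rw [← hv] at h2
      have hratio : (2 * m) / (m * l) = 2 / l := by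
        field_simp
      rw [hratio] at h2
      have hdiv : ((2:ℝ) / l) ^ δ₅ = B * Q⁻¹ := by
        rw [Real.div_rpow (by norm_num) hlpos.le, div_eq_mul_inv, ← hB, ← hQ]
      rw [hdiv] at h2
      have hml : u * Q ≤ N₈ * B * v := by
        have h3 : u ≤ N₈ * (B * Q⁻¹) * v := h2mu.trans h2
        calc u * Q ≤ (N₈ * (B * Q⁻¹) * v) * Q :=
              mul_le_mul_of_nonneg_right h3 hQpos.le
          _ = N₈ * B * v * (Q⁻¹ * Q) := by ring
          _ = N₈ * B * v := by rw [inv_mul_cancel₀ hQpos.ne']; ring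
      by_cases hone : 1 ≤ ‖ξ‖
      · rw [if_pos hone, ← hP]
        have hl1 : 1 ≤ l := by
          rw [hldef]; exact one_le_pow₀ hone
        have hPA : P ≤ A := by
          rw [hP, hA]; exact Real.rpow_le_rpow hlpos.le hl2.le hδ₄.le
        have hQ1 : 1 ≤ Q := by
          rw [hQ]; exact Real.one_le_rpow hl1 (hδ₄.trans_le hδ).le
        calc C * u * P ≤ C * u * A :=
              mul_le_mul_of_nonneg_left hPA (mul_pos hC hupos).le
          _ = C * u * A * 1 := (mul_one _).symm
          _ ≤ C * u * A * Q :=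
              mul_le_mul_of_nonneg_left hQ1 (mul_pos (mul_pos hC hupos) hApos).le
          _ = C * A * (u * Q) := by ring
          _ ≤ C * A * (N₈ * B * v) :=
              mul_le_mul_of_nonneg_left hml (mul_pos hC hApos).le
          _ = C * (N₈ * (A * B)) * v := by ring
          _ ≤ 1 * v := mul_le_mul_of_nonneg_right hCle hvpos.le
          _ = v := one_mul _
      · rw [if_neg hone, ← hQ]
        calc C * u * Q = C * (u * Q) := by ring
          _ ≤ C * (N₈ * B * v) := mul_le_mul_of_nonneg_left hml hC.le
          _ = C * (N₈ * B) * v * 1 := by ring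
          _ ≤ C * (N₈ * B) * v * A :=
              mul_le_mul_of_nonneg_left hA1
                (mul_pos (mul_pos hC (mul_pos hN₈ hBpos)) hvpos).le
          _ = C * (N₈ * (A * B)) * v := by ring
          _ ≤ 1 * v := mul_le_mul_of_nonneg_right hCle hvpos.le
          _ = v := one_mul _
  -- assemble
  have hsne : Real.sqrt m • ξ ≠ 0 :=
    smul_ne_zero (Real.sqrt_pos.mpr hmpos).ne' hξ
  have hRe := hΨ r (Real.sqrt m • ξ) hr hsne
  have hnorm : ‖Real.sqrt m • ξ‖ ^ 2 = m * l := by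
    rw [hldef, norm_smul, Real.norm_eq_abs, abs_of_nonneg (Real.sqrt_nonneg _), mul_pow,
      Real.sq_sqrt hmpos.le]
  rw [hnorm, ← hv] at hRe
  have hexp : ‖ξ‖ ^ (if 1 ≤ ‖ξ‖ then 2 * δ₄ else 2 * δ₅)
      = l ^ (if 1 ≤ ‖ξ‖ then δ₄ else δ₅) := by
    rw [hldef, ← Real.rpow_natCast ‖ξ‖ 2, ← Real.rpow_mul (norm_nonneg _)]
    split <;> norm_num
  have hfinal : C * ‖ξ‖ ^ (if 1 ≤ ‖ξ‖ then 2 * δ₄ else 2 * δ₅) ≤ t * v := by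
    rw [hexp]
    calc C * l ^ (if 1 ≤ ‖ξ‖ then δ₄ else δ₅)
        = t * (C * u * l ^ (if 1 ≤ ‖ξ‖ then δ₄ else δ₅)) := by
          rw [hu]; field_simp
      _ ≤ t * v := mul_le_mul_of_nonneg_left key ht.le
  calc t * (Ψ r (Real.sqrt m • ξ)).re ≤ t * (-(δ₆ * v)) :=
        mul_le_mul_of_nonneg_left hRe ht.le
    _ = -(δ₆ * (t * v)) := by ring
    _ ≤ -(δ₆ * C * ‖ξ‖ ^ (if 1 ≤ ‖ξ‖ then 2 * δ₄ else 2 * δ₅)) := by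
        apply neg_le_neg
        calc δ₆ * C * ‖ξ‖ ^ (if 1 ≤ ‖ξ‖ then 2 * δ₄ else 2 * δ₅)
            = δ₆ * (C * ‖ξ‖ ^ (if 1 ≤ ‖ξ‖ then 2 * δ₄ else 2 * δ₅)) := by ring
          _ ≤ δ₆ * (t * v) := mul_le_mul_of_nonneg_left hfinal hδ₆.le
end

section
/- Let ψ satisfy the weak scaling conditions with exponents 0 < δ₄ ≤ δ₅, a_t = (ψ⁻¹(1/t))^{1/2}, and suppose the kernel p(s,t,x) satisfies: for all r < t, ∫_{|z| ≥ a_{t-r}c} |q₁(r,t,z)|dz ≤ N(a_{t-r}c)^{-δ} where q₁(r,t,z) = (t-r)(a_{t-r})^{-d}(ψ(Δ)p)(r,t,(a_{t-r})^{-1}z) (equivalently the weighted L₂ bound on q₁ holds for fixed δ ∈ (0, δ₄ ∧ 1/2)). Then for 0 < s < t and c > 0: ∫ₛᵗ ∫_{|z| ≥ c} |ψ(Δ)p(r,t,z)| dz dr ≤ N(a_{t-s}c)^{-δ}, where N depends only on d, δ, and the scaling constants of ψ. -/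
open Real Set MeasureTheory

section Aux
variable (ψ : ℝ → ℝ) (δ₄ δ₅ N₇ N₈ : ℝ)
variable (hδ₄ : 0 < δ₄) (hδ45 : δ₄ ≤ δ₅) (hN₇ : 0 < N₇) (hN₈ : 0 < N₈)
variable (hpos : ∀ x : ℝ, 0 < x → 0 < ψ x)
variable (hmono : ∀ x y : ℝ, 0 < x → x ≤ y → ψ x ≤ ψ y)
variable (hscale : ∀ l₁ l₂ : ℝ, 0 < l₁ → l₁ ≤ l₂ →
      N₇ * (l₂ / l₁) ^ δ₄ ≤ ψ l₂ / ψ l₁ ∧ ψ l₂ / ψ l₁ ≤ N₈ * (l₂ / l₁) ^ δ₅)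

-- nonemptiness of the level set
include hδ₄ hN₇ hpos hscale in
lemma aux_nonempty (y : ℝ) : {s : ℝ | 0 < s ∧ y ≤ ψ s}.Nonempty := by
  set s₀ : ℝ := max 1 ((y / (N₇ * ψ 1)) ^ (1/δ₄)) with hs₀
  have h1 : (0:ℝ) < 1 := one_pos
  have hψ1 : 0 < ψ 1 := hpos 1 one_pos
  have hs₀1 : (1:ℝ) ≤ s₀ := le_max_left _ _
  have hs₀pos : 0 < s₀ := lt_of_lt_of_le one_pos hs₀1
  refine ⟨s₀, hs₀pos, ?_⟩
  have hsc := (hscale 1 s₀ one_pos hs₀1).1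
  rw [div_one] at hsc
  have h2 : N₇ * s₀ ^ δ₄ * ψ 1 ≤ ψ s₀ := by
    have := (le_div_iff₀ hψ1).mp hsc
    linarith [(div_le_iff₀ hψ1).mp (le_refl (ψ s₀ / ψ 1)), (le_div_iff₀ hψ1).mp hsc]
  refine le_trans ?_ h2
  have h3 : (y / (N₇ * ψ 1)) ^ (1/δ₄) ≤ s₀ := le_max_right _ _
  have h4 : y / (N₇ * ψ 1) ≤ s₀ ^ δ₄ := by
    rcases le_or_gt (y / (N₇ * ψ 1)) 0 with h | h
    · exact h.trans (rpow_nonneg hs₀pos.le _)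
    · have := rpow_le_rpow (rpow_nonneg h.le _) h3 hδ₄.le
      rwa [← Real.rpow_mul h.le, one_div_mul_cancel hδ₄.ne', Real.rpow_one] at this
  have hc : 0 < N₇ * ψ 1 := mul_pos hN₇ hψ1
  calc y = (y / (N₇ * ψ 1)) * (N₇ * ψ 1) := by field_simp
  _ ≤ s₀ ^ δ₄ * (N₇ * ψ 1) := by nlinarith [rpow_nonneg hs₀pos.le δ₄]
  _ = N₇ * s₀ ^ δ₄ * ψ 1 := by ring


include hδ₄ hN₇ hpos hscale in
lemma aux_lb (y : ℝ) (hy : 0 < y) :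
    ∀ s ∈ {s : ℝ | 0 < s ∧ y ≤ ψ s}, min 1 ((y * N₇ / ψ 1) ^ (1/δ₄)) ≤ s := by
  intro s hs
  obtain ⟨hs0, hsy⟩ := hs
  have hψ1 : 0 < ψ 1 := hpos 1 one_pos
  rcases le_or_gt 1 s with h1 | h1
  · exact le_trans (min_le_left _ _) h1
  · refine le_trans (min_le_right _ _) ?_
    have hsc := (hscale s 1 hs0 h1.le).1
    have hψs : 0 < ψ s := hpos s hs0
    have h2 : N₇ * (1/s) ^ δ₄ * ψ s ≤ ψ 1 := by
      have := (le_div_iff₀ hψs).mp hsc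
      linarith
    have h3 : (1/s) ^ δ₄ = (s ^ δ₄)⁻¹ := by
      rw [one_div, ← Real.rpow_neg_one s, ← Real.rpow_mul hs0.le,
        ← Real.rpow_neg hs0.le]
      ring_nf
    have hsd : 0 < s ^ δ₄ := Real.rpow_pos_of_pos hs0 _
    have h4 : y * N₇ / ψ 1 ≤ s ^ δ₄ := by
      rw [h3] at h2
      rw [div_le_iff₀ hψ1]
      have h5 : N₇ * ψ s ≤ ψ 1 * s ^ δ₄ := by
        have := mul_le_mul_of_nonneg_right h2 hsd.le
        calc N₇ * ψ s = N₇ * (s ^ δ₄)⁻¹ * ψ s * s ^ δ₄ := by field_simp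
        _ ≤ ψ 1 * s ^ δ₄ := this
      calc y * N₇ ≤ ψ s * N₇ := by nlinarith
      _ = N₇ * ψ s := by ring
      _ ≤ ψ 1 * s ^ δ₄ := h5
      _ = s ^ δ₄ * ψ 1 := by ring
    calc (y * N₇ / ψ 1) ^ (1/δ₄) ≤ (s ^ δ₄) ^ (1/δ₄) := by
          apply rpow_le_rpow (by positivity) h4 (by positivity)
    _ = s := by
          rw [← Real.rpow_mul hs0.le, mul_one_div, div_self hδ₄.ne', Real.rpow_one]

include hδ₄ hN₇ hpos hscale in
lemma aux_pos (y : ℝ) (hy : 0 < y) :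
    0 < sInf {s : ℝ | 0 < s ∧ y ≤ ψ s} := by
  have hψ1 : 0 < ψ 1 := hpos 1 one_pos
  have hε : 0 < min 1 ((y * N₇ / ψ 1) ^ (1/δ₄)) := by
    apply lt_min one_pos
    positivity
  refine lt_of_lt_of_le hε (le_csInf (aux_nonempty ψ δ₄ δ₅ N₇ N₈ hδ₄ hN₇ hpos hscale y) ?_)
  exact aux_lb ψ δ₄ δ₅ N₇ N₈ hδ₄ hN₇ hpos hscale y hy

include hδ₄ hN₇ hpos hmono hscale in
lemma aux_upper (y : ℝ) (hy : 0 < y) :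
    y ≤ ψ (2 * sInf {s : ℝ | 0 < s ∧ y ≤ ψ s}) := by
  set A := sInf {s : ℝ | 0 < s ∧ y ≤ ψ s} with hA
  have hApos : 0 < A := aux_pos ψ δ₄ δ₅ N₇ N₈ hδ₄ hN₇ hpos hscale y hy
  have hbdd : BddBelow {s : ℝ | 0 < s ∧ y ≤ ψ s} := ⟨0, fun x hx => hx.1.le⟩
  have hne := aux_nonempty ψ δ₄ δ₅ N₇ N₈ hδ₄ hN₇ hpos hscale y
  have h2 : A < 2 * A := by linarith
  obtain ⟨s', hs', hlt⟩ := (csInf_lt_iff hbdd hne).mp h2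
  exact le_trans hs'.2 (hmono s' _ hs'.1 hlt.le)

include hδ₄ hN₇ hpos hscale in
lemma aux_lower (y : ℝ) (hy : 0 < y) :
    ψ (sInf {s : ℝ | 0 < s ∧ y ≤ ψ s} / 2) < y := by
  set A := sInf {s : ℝ | 0 < s ∧ y ≤ ψ s} with hA
  have hApos : 0 < A := aux_pos ψ δ₄ δ₅ N₇ N₈ hδ₄ hN₇ hpos hscale y hy
  have hbdd : BddBelow {s : ℝ | 0 < s ∧ y ≤ ψ s} := ⟨0, fun x hx => hx.1.le⟩
  by_contra h
  push_neg at h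
  have : A ≤ A / 2 := csInf_le hbdd ⟨by linarith, h⟩
  linarith

include hδ₄ hδ45 hN₇ hN₈ hpos hmono hscale in
lemma aux_ratio (y₁ y₂ : ℝ) (hy₂ : 0 < y₂) (h12 : y₂ ≤ y₁) :
    sInf {s : ℝ | 0 < s ∧ y₂ ≤ ψ s} ≤
      4 * (N₈ * (y₂ / y₁)) ^ (1/δ₅) * sInf {s : ℝ | 0 < s ∧ y₁ ≤ ψ s} := by
  have hy₁ : 0 < y₁ := lt_of_lt_of_le hy₂ h12
  set a := sInf {s : ℝ | 0 < s ∧ y₁ ≤ ψ s} with ha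
  set b := sInf {s : ℝ | 0 < s ∧ y₂ ≤ ψ s} with hb
  have hδ₅ : 0 < δ₅ := lt_of_lt_of_le hδ₄ hδ45
  have hapos : 0 < a := aux_pos ψ δ₄ δ₅ N₇ N₈ hδ₄ hN₇ hpos hscale y₁ hy₁
  have hbpos : 0 < b := aux_pos ψ δ₄ δ₅ N₇ N₈ hδ₄ hN₇ hpos hscale y₂ hy₂
  have hba : b ≤ a := by
    apply csInf_le_csInf ⟨0, fun x hx => hx.1.le⟩
      (aux_nonempty ψ δ₄ δ₅ N₇ N₈ hδ₄ hN₇ hpos hscale y₁)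
    intro x hx; exact ⟨hx.1, le_trans h12 hx.2⟩
  have hsc := (hscale (b/2) (2*a) (by linarith) (by linarith)).2
  have h1 : y₁ ≤ ψ (2*a) := aux_upper ψ δ₄ δ₅ N₇ N₈ hδ₄ hN₇ hpos hmono hscale y₁ hy₁
  have h2 : ψ (b/2) < y₂ := aux_lower ψ δ₄ δ₅ N₇ N₈ hδ₄ hN₇ hpos hscale y₂ hy₂
  have hψb : 0 < ψ (b/2) := hpos _ (by linarith)
  have h3 : y₁ / y₂ ≤ N₈ * (2*a/(b/2)) ^ δ₅ := by
    refine le_trans ?_ hsc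
    exact div_le_div₀ (hpos _ (by linarith)).le h1 (hpos _ (by linarith)) h2.le
  have h4 : 2*a/(b/2) = 4*a/b := by
    field_simp
    ring
  rw [h4] at h3
  set M := (y₁/(y₂*N₈)) ^ (1/δ₅) with hM
  have hX : (0:ℝ) < 4*a/b := by positivity
  have hMpos : 0 < M := Real.rpow_pos_of_pos (by positivity) _
  have h6 : y₁/(y₂*N₈) ≤ (4*a/b) ^ δ₅ := by
    rw [div_le_iff₀ (by positivity : (0:ℝ) < y₂*N₈)]
    rw [div_le_iff₀ hy₂] at h3
    nlinarith
  have h5 : M ≤ 4*a/b := by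
    calc M ≤ ((4*a/b)^δ₅) ^ (1/δ₅) := rpow_le_rpow (by positivity) h6 (by positivity)
    _ = 4*a/b := by
        rw [← Real.rpow_mul hX.le, mul_one_div, div_self hδ₅.ne', Real.rpow_one]
  have h7 : (N₈*(y₂/y₁)) ^ (1/δ₅) = M⁻¹ := by
    rw [show N₈*(y₂/y₁) = (y₁/(y₂*N₈))⁻¹ by field_simp, Real.inv_rpow (by positivity)]
  rw [h7, show (4:ℝ)*M⁻¹*a = (4*a)/M by field_simp, le_div_iff₀ hMpos]
  have := (le_div_iff₀ hbpos).mp h5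
  nlinarith


end Aux

lemma aux_sqrt_rpow (x c δ : ℝ) (hx : 0 < x) (hc : 0 < c) :
    (Real.sqrt x * c) ^ (-δ) = x ^ (-(δ/2)) * c ^ (-δ) := by
  rw [Real.sqrt_eq_rpow, Real.mul_rpow (by positivity) hc.le, ← Real.rpow_mul hx.le]
  congr 1
  ring

lemma aux_inv_le (x y k : ℝ) (hx : 0 < x) (hy : 0 < y) (hk : 0 < k) (h : y ≤ k * x) :
    x⁻¹ ≤ k * y⁻¹ := by
  have h2 : x⁻¹ * y ≤ k := by
    rw [inv_mul_eq_div, div_le_iff₀ hx]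
    linarith
  calc x⁻¹ = x⁻¹ * y * y⁻¹ := by field_simp
  _ ≤ k * y⁻¹ := mul_le_mul_of_nonneg_right h2 (by positivity)


/-- Tail estimate for the kernel `ψ(Δ)p`: from the rescaled single-time bound
`∫_{|z| ≥ c} |ψ(Δ)p(r,t,z)| dz ≤ N (t-r)⁻¹ (a_{t-r} c)^{-δ}` one gets
`∫ₛᵗ ∫_{|z|≥c} |ψ(Δ)p(r,t,z)| dz dr ≤ N (a_{t-s} c)^{-δ}`,
where `a_u = (ψ⁻¹(1/u))^{1/2}`. -/
theorem stmt_18 {d : ℕ} (ψ : ℝ → ℝ) (δ₄ δ₅ N₇ N₈ δ : ℝ)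
    (hδ₄ : 0 < δ₄) (hδ45 : δ₄ ≤ δ₅) (hN₇ : 0 < N₇) (hN₈ : 0 < N₈)
    (hδ : 0 < δ) (hδ' : δ < min δ₄ (1 / 2))
    (hpos : ∀ x : ℝ, 0 < x → 0 < ψ x)
    (hmono : ∀ x y : ℝ, 0 < x → x ≤ y → ψ x ≤ ψ y)
    (hscale : ∀ l₁ l₂ : ℝ, 0 < l₁ → l₁ ≤ l₂ →
      N₇ * (l₂ / l₁) ^ δ₄ ≤ ψ l₂ / ψ l₁ ∧ ψ l₂ / ψ l₁ ≤ N₈ * (l₂ / l₁) ^ δ₅)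
    (P : ℝ → ℝ → EuclideanSpace ℝ (Fin d) → ℝ)
    (Nq : ℝ) (hNq : 0 < Nq)
    (hP : ∀ r t c : ℝ, 0 < r → r < t → 0 < c →
      (∫ z in {z : EuclideanSpace ℝ (Fin d) | c ≤ ‖z‖}, |P r t z|) ≤
        Nq * (t - r)⁻¹ *
          (Real.sqrt (sInf {s : ℝ | 0 < s ∧ (t - r)⁻¹ ≤ ψ s}) * c) ^ (-δ)) :
    ∃ N : ℝ, 0 < N ∧ ∀ s t c : ℝ, 0 < s → s < t → 0 < c →
      (∫ r in Set.Ioo s t, ∫ z in {z : EuclideanSpace ℝ (Fin d) | c ≤ ‖z‖},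
        |P r t z|) ≤
        N * (Real.sqrt (sInf {s' : ℝ | 0 < s' ∧ (t - s)⁻¹ ≤ ψ s'}) * c) ^ (-δ) := by
  have hδ₅ : 0 < δ₅ := lt_of_lt_of_le hδ₄ hδ45
  set β : ℝ := δ / (2 * δ₅) with hβdef
  have hβ : 0 < β := by positivity
  refine ⟨Nq * 4 ^ (δ/2) * N₈ ^ β * β⁻¹, by positivity, ?_⟩
  intro s t c hs hst hc
  set v : ℝ := t - s with hv
  have hvpos : 0 < v := by simp [hv]; linarith
  set Av : ℝ := sInf {s' : ℝ | 0 < s' ∧ (t - s)⁻¹ ≤ ψ s'} with hAv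
  have hAvpos : 0 < Av := aux_pos ψ δ₄ δ₅ N₇ N₈ hδ₄ hN₇ hpos hscale _ (by positivity)
  set K : ℝ := Nq * 4 ^ (δ/2) * N₈ ^ β * v ^ (-β) * (Av ^ (-(δ/2)) * c ^ (-δ)) with hK
  have hKpos : 0 < K := by positivity
  -- pointwise bound
  have claim : ∀ r ∈ Set.Ioo s t,
      (∫ z in {z : EuclideanSpace ℝ (Fin d) | c ≤ ‖z‖}, |P r t z|) ≤
        K * (t - r) ^ (β - 1) := by
    intro r hr
    obtain ⟨hr1, hr2⟩ := hr
    have hrpos : 0 < r := hs.trans hr1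
    set u : ℝ := t - r with hu
    have hupos : 0 < u := by simp [hu]; linarith
    have huv : u ≤ v := by simp [hu, hv]; linarith
    set Au : ℝ := sInf {s' : ℝ | 0 < s' ∧ (t - r)⁻¹ ≤ ψ s'} with hAu
    have hAupos : 0 < Au := aux_pos ψ δ₄ δ₅ N₇ N₈ hδ₄ hN₇ hpos hscale _ (by positivity)
    have step1 := hP r t c hrpos hr2 hc
    rw [aux_sqrt_rpow _ _ _ hAupos hc] at step1
    refine step1.trans ?_
    -- ratio bound
    have hratio : Av ≤ 4 * (N₈ * (u / v)) ^ (1/δ₅) * Au := by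
      have := aux_ratio ψ δ₄ δ₅ N₇ N₈ hδ₄ hδ45 hN₇ hN₈ hpos hmono hscale
        ((t-r)⁻¹) ((t-s)⁻¹) (by positivity) (by
          apply inv_anti₀ hupos
          simpa [hu, hv] using huv)
      have heq : (t-s)⁻¹ / (t-r)⁻¹ = u / v := by
        rw [div_eq_mul_inv, inv_inv]
        rw [show (t:ℝ)-r = u from rfl, show (t:ℝ)-s = v from rfl]
        ring
      rwa [heq] at this
    set kk : ℝ := 4 * (N₈ * (u / v)) ^ (1/δ₅) with hkk
    have hkkpos : 0 < kk := by positivity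
    have h3 : Au ^ (-(δ/2)) ≤ kk ^ (δ/2) * Av ^ (-(δ/2)) := by
      have h31 : Av ^ (δ/2) ≤ kk ^ (δ/2) * Au ^ (δ/2) := by
        calc Av ^ (δ/2) ≤ (kk * Au) ^ (δ/2) :=
              Real.rpow_le_rpow hAvpos.le hratio (by positivity)
        _ = kk ^ (δ/2) * Au ^ (δ/2) := Real.mul_rpow hkkpos.le hAupos.le
      rw [Real.rpow_neg hAupos.le, Real.rpow_neg hAvpos.le]
      exact aux_inv_le _ _ _ (by positivity) (by positivity) (by positivity) h31
    have h4 : kk ^ (δ/2) = 4 ^ (δ/2) * N₈ ^ β * (u/v) ^ β := by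
      rw [hkk, Real.mul_rpow (by norm_num) (by positivity),
        ← Real.rpow_mul (by positivity), show 1/δ₅ * (δ/2) = β by rw [hβdef]; field_simp,
        Real.mul_rpow hN₈.le (by positivity), mul_assoc]
    have h5 : (u/v) ^ β = u ^ β * (v ^ β)⁻¹ := by
      rw [Real.div_rpow hupos.le hvpos.le, div_eq_mul_inv]
    calc Nq * (t - r)⁻¹ * (Au ^ (-(δ/2)) * c ^ (-δ))
        ≤ Nq * (t - r)⁻¹ * ((kk ^ (δ/2) * Av ^ (-(δ/2))) * c ^ (-δ)) := by
          gcongr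
    _ = K * (t - r) ^ (β - 1) := by
          rw [h4, h5, hK, show (t:ℝ) - r = u from rfl,
            Real.rpow_sub hupos, Real.rpow_one,
            show v ^ (-β) = (v ^ β)⁻¹ from Real.rpow_neg hvpos.le β]
          ring
  -- integral comparison
  have hFnonneg : ∀ r : ℝ,
      0 ≤ ∫ z in {z : EuclideanSpace ℝ (Fin d) | c ≤ ‖z‖}, |P r t z| :=
    fun r => integral_nonneg fun z => abs_nonneg _
  have hInt : IntegrableOn (fun r => K * (t - r) ^ (β - 1)) (Set.Ioo s t) := by
    have h1 : IntervalIntegrable (fun x : ℝ => x ^ (β - 1)) volume 0 (t - s) :=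
      intervalIntegral.intervalIntegrable_rpow' (by linarith)
    have h2 := (h1.comp_sub_left t).symm
    rw [show t - (t - s) = s by ring, sub_zero] at h2
    rw [intervalIntegrable_iff_integrableOn_Ioc_of_le hst.le] at h2
    exact (h2.mono_set Set.Ioo_subset_Ioc_self).const_mul K

  have key := integral_mono_of_nonneg (μ := volume.restrict (Set.Ioo s t))
    (Filter.Eventually.of_forall hFnonneg) hInt
    ((ae_restrict_iff' measurableSet_Ioo).mpr (Filter.Eventually.of_forall claim))
  refine key.trans ?_
  have hIval : ∫ r in Set.Ioo s t, (t - r) ^ (β - 1) = v ^ β / β := by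
    rw [← MeasureTheory.integral_Ioc_eq_integral_Ioo,
      ← intervalIntegral.integral_of_le hst.le,
      intervalIntegral.integral_comp_sub_left (fun x : ℝ => x ^ (β - 1)) t,
      sub_self, integral_rpow (Or.inl (by linarith))]
    rw [show β - 1 + 1 = β by ring, Real.zero_rpow hβ.ne', hv]
    ring
  rw [integral_const_mul, hIval,
    aux_sqrt_rpow _ _ _ hAvpos hc, hK,
    show v ^ (-β) = (v ^ β)⁻¹ from Real.rpow_neg hvpos.le β]
  have hvβ : v ^ β ≠ 0 := (Real.rpow_pos_of_pos hvpos β).ne'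
  field_simp
  exact le_rfl
end
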